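/- Let r : ℝ^K → ℝ with r(p) ≥ 0 and P : ℝ^K → ℝ with P(p) > 0 for all p in a feasible set S. Define η* = sup over p ∈ S of r(p)/P(p), attained at p*. Then η* = r(p*)/P(p*) if and only if max over p ∈ S of (r(p) − η*·P(p)) = r(p*) − η*·P(p*) = 0. -/

import Mathlib

/-- Dinkelbach fractional programming equivalence. -/
theorem dinkelbach_equivalence {K : ℕ} (S : Set (Fin K → ℝ))
    (r P : (Fin K → ℝ) → ℝ)
    (hr : ∀ p ∈ S, 0 ≤ r p) (hP : ∀ p ∈ S, 0 < P p)
    (pstar : Fin K → ℝ) (hpstar : pstar ∈ S)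
    (ηstar : ℝ) (hη : IsLUB ((fun p => r p / P p) '' S) ηstar) :
    ηstar = r pstar / P pstar ↔
      (IsGreatest ((fun p => r p - ηstar * P p) '' S) (r pstar - ηstar * P pstar) ∧
        r pstar - ηstar * P pstar = 0) := by
  have hub : ∀ p ∈ S, r p / P p ≤ ηstar := fun p hp =>
    hη.1 (Set.mem_image_of_mem _ hp)
  have key : ∀ p ∈ S, r p - ηstar * P p ≤ 0 := by
    intro p hp
    have h1 := hub p hp
    have h2 := hP p hp
    rw [div_le_iff₀ h2] at h1
    linarith
  constructor
  · intro h
    have hz : r pstar - ηstar * P pstar = 0 := by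
      have h2 := hP pstar hpstar
      rw [h]
      field_simp
      ring
    refine ⟨⟨Set.mem_image_of_mem _ hpstar, ?_⟩, hz⟩
    rintro q ⟨p, hp, rfl⟩
    rw [hz]
    exact key p hp
  · rintro ⟨_, heq⟩
    have h2 := hP pstar hpstar
    rw [eq_div_iff (ne_of_gt h2)]
    linarith
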